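/- Let f_0 ∈ ℂ[[x_1,…,x_n]] be quasihomogeneous of degree d with respect to a weight w ∈ ℕ^n with all w_i > 0. Then f_0 satisfies Condition A: for every g of filtration d + δ with δ > 0 lying in the ideal generated by the partial derivatives of f_0, there exist power series v_1,…,v_n and g' such that g = ∑_i (∂f_0/∂x_i)·v_i + g', where the vector field (v_1,…,v_n) has filtration ≥ δ (each monomial of v_i has w-degree ≥ w_i + δ) and g' has filtration > d + δ. -/

import Mathlib

set_option synthInstance.maxHeartbeats 1000000
set_option maxHeartbeats 1000000

open MvPolynomial

/-- `f ∈ E_d^w`: every monomial of `f` has `w`-weighted degree at least `d`. -/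
def MemE (n : ℕ) (w : Fin n → ℕ) (d : ℕ) (f : MvPowerSeries (Fin n) ℂ) : Prop :=
  ∀ m : Fin n →₀ ℕ, MvPowerSeries.coeff m f ≠ 0 → d ≤ ∑ j, w j * m j

/-- Quasihomogeneous polynomials satisfy Condition A: any `g` of filtration `d + δ`
(`δ > 0`) in the ideal generated by the partials of `f₀` decomposes as
`g = ∑ (∂f₀/∂x_i)·v_i + g'` where the vector field `v` has filtration `≥ δ` and
`g'` has filtration `> d + δ`. -/
theorem quasihomogeneous_conditionA (n : ℕ) (w : Fin n → ℕ) (hw : ∀ i, 0 < w i)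
    (d : ℕ) (f₀ : MvPolynomial (Fin n) ℂ)
    (hf₀ : ∀ s ∈ f₀.support, ∑ i, w i * s i = d)
    (δ : ℕ) (hδ : 0 < δ) (g : MvPowerSeries (Fin n) ℂ)
    (hg : g ∈ Ideal.span (Set.range fun i => (↑(pderiv i f₀) : MvPowerSeries (Fin n) ℂ)))
    (hgfil : MemE n w (d + δ) g) :
    ∃ (v : Fin n → MvPowerSeries (Fin n) ℂ) (g' : MvPowerSeries (Fin n) ℂ),
      g = (∑ i, (↑(pderiv i f₀) : MvPowerSeries (Fin n) ℂ) * v i) + g' ∧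
      (∀ i, MemE n w (w i + δ) (v i)) ∧
      MemE n w (d + δ + 1) g' := by
  classical
  set W : (Fin n →₀ ℕ) → ℕ := fun m => ∑ j, w j * m j with hWdef
  have hWadd : ∀ a b : Fin n →₀ ℕ, W (a + b) = W a + W b := by
    intro a b
    simp only [hWdef, Finsupp.add_apply, Nat.mul_add]
    exact Finset.sum_add_distrib
  have hWsingle : ∀ i : Fin n, W (Finsupp.single i 1) = w i := by
    intro i
    simp only [hWdef, Finsupp.single_apply]
    rw [Finset.sum_eq_single i]
    · simp
    · intro j _ hj
      simp [Ne.symm hj]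
    · simp
  -- weight of monomials of the derivative
  have hder : ∀ (i : Fin n) (s : Fin n →₀ ℕ),
      MvPolynomial.coeff s (pderiv i f₀) ≠ 0 → W s + w i = d := by
    intro i s hs
    have h1 : coeff s (pderiv i f₀) =
        ∑ t ∈ f₀.support, coeff s (pderiv i (monomial t (coeff t f₀))) := by
      conv_lhs => rw [f₀.as_sum]
      rw [map_sum, MvPolynomial.coeff_sum]
    rw [h1] at hs
    obtain ⟨t, ht, hts⟩ := Finset.exists_ne_zero_of_sum_ne_zero hs
    rw [pderiv_monomial, coeff_monomial] at hts
    split_ifs at hts with hst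
    · have hti : t i ≠ 0 := by
        intro h0
        rw [h0] at hts; simp at hts
      have hts' : t = s + Finsupp.single i 1 := by
        subst hst
        ext j
        by_cases hj : j = i
        · subst hj
          simp [Finsupp.single_apply]
          omega
        · have hij : i ≠ j := fun h => hj h.symm
          simp [Finsupp.single_apply, hij]
      have := hf₀ t ht
      rw [show (∑ i, w i * t i) = W t from rfl] at this
      rw [hts', hWadd, hWsingle] at this
      exact this
    · exact absurd rfl hts
  -- obtain coefficients of the ideal membership
  rw [Ideal.span, Submodule.mem_span_range_iff_exists_fun] at hg
  obtain ⟨a, ha⟩ := hg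
  -- truncate to high filtration
  set v : Fin n → MvPowerSeries (Fin n) ℂ := fun i m =>
    if w i + δ ≤ W m then MvPowerSeries.coeff m (a i) else 0 with hvdef
  have hvcoeff : ∀ (i : Fin n) (m : Fin n →₀ ℕ),
      MvPowerSeries.coeff m (v i) =
        if w i + δ ≤ W m then MvPowerSeries.coeff m (a i) else 0 := fun i m => rfl
  refine ⟨v, 0, ?_, ?_, ?_⟩
  · rw [add_zero]
    apply MvPowerSeries.ext
    intro m
    rw [map_sum]
    by_cases hm : d + δ ≤ W m
    · -- high weight: each term agrees with the one from `a`
      have : MvPowerSeries.coeff m g =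
          ∑ i, MvPowerSeries.coeff m
            ((↑(pderiv i f₀) : MvPowerSeries (Fin n) ℂ) * a i) := by
        rw [← map_sum]
        congr 1
        rw [← ha]
        congr 1
        funext i
        rw [smul_eq_mul, mul_comm]
      rw [this]
      apply Finset.sum_congr rfl
      intro i _
      rw [MvPowerSeries.coeff_mul, MvPowerSeries.coeff_mul]
      apply Finset.sum_congr rfl
      intro p hp
      rw [Finset.HasAntidiagonal.mem_antidiagonal] at hp
      by_cases hp1 : MvPowerSeries.coeff p.1 (↑(pderiv i f₀) : MvPowerSeries (Fin n) ℂ) = 0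
      · rw [hp1, zero_mul, zero_mul]
      · rw [MvPolynomial.coeff_coe] at hp1
        have hw1 : W p.1 + w i = d := hder i p.1 hp1
        have hWm : W p.1 + W p.2 = W m := by rw [← hWadd, hp]
        have : w i + δ ≤ W p.2 := by omega
        rw [hvcoeff, if_pos this]
    · -- low weight: both sides vanish
      have hg0 : MvPowerSeries.coeff m g = 0 := by
        by_contra h
        exact hm (hgfil m h)
      rw [hg0]
      symm
      apply Finset.sum_eq_zero
      intro i _
      rw [MvPowerSeries.coeff_mul]
      apply Finset.sum_eq_zero
      intro p hp
      rw [Finset.HasAntidiagonal.mem_antidiagonal] at hp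
      by_cases hp1 : MvPowerSeries.coeff p.1 (↑(pderiv i f₀) : MvPowerSeries (Fin n) ℂ) = 0
      · rw [hp1, zero_mul]
      · rw [MvPolynomial.coeff_coe] at hp1
        have hw1 : W p.1 + w i = d := hder i p.1 hp1
        have hWm : W p.1 + W p.2 = W m := by rw [← hWadd, hp]
        have hlow : ¬ (w i + δ ≤ W p.2) := by omega
        rw [hvcoeff, if_neg hlow, mul_zero]
  · intro i m hm
    rw [hvcoeff] at hm
    by_contra h
    rw [if_neg h] at hm
    exact hm rfl
  · intro m hm
    simp at hm
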